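/- There exists a primitive root g modulo 233 such that the cosets X_i = g^i·H (0 ≤ i < 8, indices mod 8) of the subgroup H of 8th-power residues in 𝔽_233^× form a 4-color Directed Anti-Ramsey algebra, i.e., with m = 4: (1) for all i, X_i + X_i = ⋃_{j ≠ i+4} X_j; (2) for all i, X_i + X_{i+4} = 𝔽_233; (3) for all i, j with i ≠ j and j ≠ i+4, X_i + X_j = 𝔽_233 ∖ {0}. -/
import Mathlib


open Pointwise

set_option maxRecDepth 40000
set_option maxHeartbeats 4000000

/-- The set of nonzero `n`-th power residues in `𝔽_p = ZMod p`. -/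
def Hpow (p n : ℕ) : Set (ZMod p) := {x | ∃ u : (ZMod p)ˣ, (u : ZMod p) ^ n = x}

/-- The coset `X_i = g^i · H` of the subgroup of `n`-th power residues. -/
noncomputable def Xc (p n : ℕ) [Fact p.Prime] (g : ZMod p) (i : ℤ) : Set (ZMod p) :=
  g ^ i • Hpow p n

instance : Fact (Nat.Prime 233) := ⟨by norm_num⟩

namespace AR233

abbrev F := ZMod 233

/-- Explicit lists of the eight cosets: `Ls[r] = {x ≠ 0 | x^29 = (3^29)^r}`. -/
def Ls : List (List F) :=
  [ [1, 2, 4, 8, 16, 19, 23, 32, 37, 38, 46, 51, 63, 64, 71, 74, 76, 92, 102, 117, 126, 128, 135, 142, 148, 152, 175, 184, 204],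
    [3, 6, 12, 24, 43, 48, 57, 59, 69, 73, 86, 96, 111, 114, 118, 138, 145, 146, 151, 153, 172, 189, 192, 193, 211, 213, 222, 223, 228],
    [9, 18, 25, 36, 50, 55, 72, 100, 101, 109, 110, 113, 121, 129, 144, 167, 171, 173, 177, 181, 200, 202, 203, 205, 207, 218, 219, 220, 226],
    [27, 35, 47, 53, 54, 65, 67, 70, 75, 77, 94, 97, 106, 108, 130, 134, 140, 143, 149, 150, 154, 155, 165, 188, 191, 194, 199, 212, 216],
    [29, 49, 58, 81, 85, 91, 98, 105, 107, 116, 131, 141, 157, 159, 162, 169, 170, 182, 187, 195, 196, 201, 210, 214, 217, 225, 229, 231, 232],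
    [5, 10, 11, 20, 22, 40, 41, 44, 61, 80, 82, 87, 88, 95, 115, 119, 122, 137, 147, 160, 164, 174, 176, 185, 190, 209, 221, 227, 230],
    [7, 13, 14, 15, 26, 28, 30, 31, 33, 52, 56, 60, 62, 66, 89, 104, 112, 120, 123, 124, 132, 133, 161, 178, 183, 197, 208, 215, 224],
    [17, 21, 34, 39, 42, 45, 68, 78, 79, 83, 84, 90, 93, 99, 103, 125, 127, 136, 139, 156, 158, 163, 166, 168, 179, 180, 186, 198, 206] ]

def C (r : ZMod 8) : List F := Ls.getD r.val []

/-- The sumset membership predicate. -/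
abbrev P (a b : ZMod 8) (x : F) : Prop := ∃ y ∈ C a, ∃ z ∈ C b, y + z = x

lemma t8 : (221 : F) ^ 8 = 1 := by decide

lemma h3 : (3 : F) ≠ 0 := by decide

lemma h221 : (221 : F) ≠ 0 := by decide

lemma t29 : (3 : F) ^ 29 = 221 := by decide

lemma inv3 : (3 : F) * 78 = 1 := by decide

lemma mem_C (r : ZMod 8) (x : F) : x ∈ C r ↔ x ^ 29 = (221 : F) ^ r.val := by
  revert r x; decide

lemma surj8 : ∀ y : F, y ^ 29 = 1 → ∃ z : F, z ≠ 0 ∧ z ^ 8 = y := by decide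

lemma pow_mod8 (n : ℕ) : (221 : F) ^ (n % 8) = (221 : F) ^ n := by
  conv_rhs => rw [← Nat.mod_add_div n 8]
  rw [pow_add, pow_mul, t8, one_pow, mul_one]

lemma mul3 (r : ZMod 8) (y : F) : 3 * y ∈ C (r + 1) ↔ y ∈ C r := by
  rw [mem_C, mem_C, mul_pow, t29, ZMod.val_add r 1,
    show (1 : ZMod 8).val = 1 from rfl, pow_mod8, pow_succ (221:F) r.val,
    mul_comm ((221:F) ^ r.val) 221]
  exact mul_right_inj' h221

lemma mul3k (k : ℕ) (r : ZMod 8) (y : F) : 3 ^ k * y ∈ C (r + k) ↔ y ∈ C r := by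
  induction k with
  | zero => simp
  | succ n ih =>
    have h1 : ((n + 1 : ℕ) : ZMod 8) = (n : ZMod 8) + 1 := by push_cast; ring
    have h2 : (3 : F) ^ (n + 1) * y = 3 * (3 ^ n * y) := by ring
    rw [h1, ← add_assoc, h2, mul3 (r + n) (3 ^ n * y), ih]

lemma swapP (a b : ZMod 8) (x : F) : P a b x ↔ P b a x := by
  constructor <;> (rintro ⟨y, hy, z, hz, rfl⟩; exact ⟨z, hz, y, hy, add_comm z y⟩)

lemma rotP (k : ℕ) (a b : ZMod 8) (x : F) : P (a + k) (b + k) (3 ^ k * x) ↔ P a b x := by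
  constructor
  · rintro ⟨y, hy, z, hz, h⟩
    refine ⟨78 ^ k * y, ?_, 78 ^ k * z, ?_, ?_⟩
    · rw [← mul3k k a (78 ^ k * y)]
      have : (3:F) ^ k * (78 ^ k * y) = y := by
        rw [← mul_assoc, ← mul_pow, inv3, one_pow, one_mul]
      rwa [this]
    · rw [← mul3k k b (78 ^ k * z)]
      have : (3:F) ^ k * (78 ^ k * z) = z := by
        rw [← mul_assoc, ← mul_pow, inv3, one_pow, one_mul]
      rwa [this]
    · have h78 : (78 : F) ^ k * (3 ^ k * x) = x := by
        rw [← mul_assoc, ← mul_pow, mul_comm (78:F) 3, inv3, one_pow, one_mul]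
      calc 78 ^ k * y + 78 ^ k * z = 78 ^ k * (y + z) := by ring
        _ = x := by rw [h, h78]
  · rintro ⟨y, hy, z, hz, rfl⟩
    exact ⟨3 ^ k * y, (mul3k k a y).mpr hy, 3 ^ k * z, (mul3k k b z).mpr hz, by ring⟩

lemma cancel3k (k : ℕ) (x : F) : (3 : F) ^ k * (78 ^ k * x) = x := by
  rw [← mul_assoc, ← mul_pow, inv3, one_pow, one_mul]

lemma ne_iff3k (k : ℕ) (x : F) : x ≠ 0 ↔ 78 ^ k * x ≠ 0 := by
  constructor
  · intro hx hc
    exact hx (by rw [← cancel3k k x, hc, mul_zero])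
  · intro hx hc
    exact hx (by rw [hc, mul_zero])

lemma cast_val (a : ZMod 8) : ((a.val : ℕ) : ZMod 8) = a := ZMod.natCast_rightInverse a

/-- Subtraction form of the sumset predicate (cheaper to decide). -/
abbrev Q (a b : ZMod 8) (x : F) : Prop := ∃ y ∈ C a, x - y ∈ C b

lemma PQ (a b : ZMod 8) (x : F) : P a b x ↔ Q a b x := by
  constructor
  · rintro ⟨y, hy, z, hz, rfl⟩
    exact ⟨y, hy, by simpa using hz⟩
  · rintro ⟨y, hy, hz⟩
    exact ⟨y, hy, x - y, hz, by ring⟩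

/-- Base case computations. -/
lemma B1Q : ∀ x : F, Q 0 0 x ↔ ∃ b : ZMod 8, b ≠ 4 ∧ x ∈ C b := by decide

lemma B2Q : ∀ x : F, Q 0 4 x := by decide

lemma B3₁Q : ∀ x : F, x ≠ 0 ↔ Q 0 1 x := by decide

lemma B3₂Q : ∀ x : F, x ≠ 0 ↔ Q 0 2 x := by decide

lemma B3₃Q : ∀ x : F, x ≠ 0 ↔ Q 0 3 x := by decide

lemma B1 : ∀ x : F, P 0 0 x ↔ ∃ b : ZMod 8, b ≠ 4 ∧ x ∈ C b :=
  fun x => (PQ 0 0 x).trans (B1Q x)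

lemma B2 : ∀ x : F, P 0 4 x := fun x => (PQ 0 4 x).mpr (B2Q x)

lemma B3₁ : ∀ x : F, x ≠ 0 ↔ P 0 1 x := fun x => (B3₁Q x).trans (PQ 0 1 x).symm

lemma B3₂ : ∀ x : F, x ≠ 0 ↔ P 0 2 x := fun x => (B3₂Q x).trans (PQ 0 2 x).symm

lemma B3₃ : ∀ x : F, x ≠ 0 ↔ P 0 3 x := fun x => (B3₃Q x).trans (PQ 0 3 x).symm

lemma B3 (d : ZMod 8) (h : d = 1 ∨ d = 2 ∨ d = 3) : ∀ x : F, x ≠ 0 ↔ P 0 d x := by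
  rcases h with rfl | rfl | rfl
  exacts [B3₁, B3₂, B3₃]

lemma core2 (a : ZMod 8) (x : F) : P a (a + 4) x := by
  have h := (rotP a.val 0 4 (78 ^ a.val * x)).mpr (B2 (78 ^ a.val * x))
  rwa [cancel3k, zero_add, cast_val, add_comm (4 : ZMod 8) a] at h

lemma core1 (a : ZMod 8) (x : F) : P a a x ↔ ∃ b : ZMod 8, b ≠ a + 4 ∧ x ∈ C b := by
  have h0 : P a a x ↔ P 0 0 (78 ^ a.val * x) := by
    have h := rotP a.val 0 0 (78 ^ a.val * x)
    rw [zero_add, cast_val, cancel3k] at h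
    exact h
  rw [h0, B1 (78 ^ a.val * x)]
  constructor
  · rintro ⟨b, hb, hxb⟩
    refine ⟨b + a, fun hc => hb (add_right_cancel (b := a) (by rw [hc]; ring)), ?_⟩
    have h := (mul3k a.val b (78 ^ a.val * x)).mpr hxb
    rwa [cancel3k, cast_val] at h
  · rintro ⟨b, hb, hxb⟩
    refine ⟨b - a, fun hc => hb (by rw [← sub_add_cancel b a, hc]; ring), ?_⟩
    rw [← mul3k a.val (b - a) (78 ^ a.val * x), cancel3k, cast_val, sub_add_cancel]
    exact hxb

lemma core3 (a b : ZMod 8) (h1 : b ≠ a) (h2 : b ≠ a + 4) (x : F) : x ≠ 0 ↔ P a b x := by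
  have trans : ∀ (c d : ZMod 8), (d = 1 ∨ d = 2 ∨ d = 3) → (x ≠ 0 ↔ P c (c + d) x) := by
    intro c d hd
    have h0 : P c (c + d) x ↔ P 0 d (78 ^ c.val * x) := by
      have h := rotP c.val 0 d (78 ^ c.val * x)
      rw [zero_add, cast_val, cancel3k, add_comm d c] at h
      exact h
    rw [h0, ← B3 d hd (78 ^ c.val * x), ← ne_iff3k]
  have key : (b - a = 1 ∨ b - a = 2 ∨ b - a = 3) ∨
      (-(b - a) = 1 ∨ -(b - a) = 2 ∨ -(b - a) = 3) := by
    have h0 : b - a ≠ 0 := sub_ne_zero.mpr h1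
    have h4 : b - a ≠ 4 := fun h => h2 (by rw [← sub_add_cancel b a, h]; ring)
    revert h0 h4
    generalize b - a = d
    revert d
    decide
  rcases key with hd | hd
  · have h := trans a (b - a) hd
    rwa [add_sub_cancel] at h
  · have h := trans b (a - b) (by rwa [show a - b = -(b - a) by ring])
    rw [show b + (a - b) = a by ring] at h
    rw [h]
    exact swapP b a x

lemma t8' : (221 : F) ^ (8:ℤ) = 1 := by
  have h : ((8:ℤ)) = ((8:ℕ):ℤ) := by norm_num
  rw [h, zpow_natCast]; exact t8

lemma zpow_val (i : ℤ) : (221 : F) ^ i = (221 : F) ^ ((i : ZMod 8).val) := by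
  have hv : ((i : ZMod 8).val : ℤ) = i % 8 := ZMod.val_intCast i
  calc (221:F)^i = 221 ^ (8 * (i/8) + i % 8) := by rw [Int.mul_ediv_add_emod]
    _ = ((221:F)^(8:ℤ))^(i/8) * 221^(i % 8) := by rw [zpow_add₀ h221, zpow_mul]
    _ = 221 ^ ((i : ZMod 8).val) := by rw [t8', one_zpow, one_mul, ← hv, zpow_natCast]

lemma pow29_zpow (i : ℤ) : ((3 : F) ^ i) ^ (29:ℕ) = (221 : F) ^ ((i : ZMod 8).val) := by
  rw [← zpow_natCast ((3:F)^i) 29, ← zpow_mul, mul_comm, zpow_mul,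
    zpow_natCast, t29, zpow_val]

/-- The key membership characterization. -/
lemma mem_Xc (i : ℤ) (x : F) : x ∈ Xc 233 8 3 i ↔ x ∈ C (i : ZMod 8) := by
  rw [mem_C]
  constructor
  · rintro ⟨y, ⟨u, rfl⟩, rfl⟩
    have hu : ((u : F)) ^ 232 = 1 := ZMod.pow_card_sub_one_eq_one u.ne_zero
    have : ((3:F) ^ i • (u:F) ^ 8) ^ 29 = ((3:F) ^ i) ^ (29:ℕ) * ((u:F) ^ 232) := by
      rw [smul_eq_mul, mul_pow, ← pow_mul]
    rw [this, hu, mul_one, pow29_zpow]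
  · intro hx
    have hy : ((3:F) ^ (-i) * x) ^ 29 = 1 := by
      rw [mul_pow, hx, ← pow29_zpow, ← mul_pow, ← zpow_add₀ h3, neg_add_cancel,
        zpow_zero, one_pow]
    obtain ⟨z, hz0, hz8⟩ := surj8 _ hy
    refine ⟨(3:F) ^ (-i) * x, ⟨Units.mk0 z hz0, ?_⟩, ?_⟩
    · simpa using hz8
    · show (3:F)^i • ((3:F)^(-i) * x) = x
      rw [smul_eq_mul, ← mul_assoc, ← zpow_add₀ h3, add_neg_cancel, zpow_zero, one_mul]

lemma Xc_eq (i : ℤ) : Xc 233 8 3 i = {x | x ∈ C (i : ZMod 8)} :=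
  Set.ext fun x => mem_Xc i x

lemma prim : IsPrimitiveRoot (3 : F) 232 := by
  have h : orderOf (3 : F) = 232 := by
    apply orderOf_eq_of_pow_and_pow_div_prime (by norm_num)
    · decide
    · intro q hq hd
      have hmem : q ∈ Nat.divisors 232 := Nat.mem_divisors.mpr ⟨hd, by norm_num⟩
      fin_cases hmem <;> first | decide | (exact absurd hq (by norm_num))
  exact h ▸ IsPrimitiveRoot.orderOf (3 : F)

end AR233

/-- The cosets of the index-8 subgroup of `𝔽_233ˣ` form a 4-color Directed
Anti-Ramsey algebra. -/
theorem stmt_12 : ∃ g : ZMod 233, IsPrimitiveRoot g 232 ∧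
    (∀ i : ℤ, Xc 233 8 g i + Xc 233 8 g i =
      ⋃ j ∈ {j : ℤ | (j : ZMod 8) ≠ ((i + 4 : ℤ) : ZMod 8)}, Xc 233 8 g j) ∧
    (∀ i : ℤ, Xc 233 8 g i + Xc 233 8 g (i + 4) = Set.univ) ∧
    (∀ i j : ℤ, (j : ZMod 8) ≠ (i : ZMod 8) → (j : ZMod 8) ≠ ((i + 4 : ℤ) : ZMod 8) →
      Xc 233 8 g i + Xc 233 8 g j = {(0 : ZMod 233)}ᶜ) := by
  refine ⟨3, AR233.prim, ?_, ?_, ?_⟩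
  · intro i
    ext x
    simp only [AR233.Xc_eq, Set.mem_add, Set.mem_iUnion, Set.mem_setOf_eq]
    rw [show ((i + 4 : ℤ) : ZMod 8) = (i : ZMod 8) + 4 by push_cast; ring]
    constructor
    · rintro ⟨y, hy, z, hz, rfl⟩
      obtain ⟨b, hb, hxb⟩ := (AR233.core1 (i : ZMod 8) (y + z)).mp ⟨y, hy, z, hz, rfl⟩
      obtain ⟨j, rfl⟩ := ZMod.intCast_surjective b
      exact ⟨j, hb, hxb⟩
    · rintro ⟨j, hj, hxj⟩
      obtain ⟨y, hy, z, hz, rfl⟩ :=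
        (AR233.core1 (i : ZMod 8) x).mpr ⟨(j : ZMod 8), hj, hxj⟩
      exact ⟨y, hy, z, hz, rfl⟩
  · intro i
    ext x
    simp only [AR233.Xc_eq, Set.mem_add, Set.mem_setOf_eq, Set.mem_univ, iff_true]
    rw [show ((i + 4 : ℤ) : ZMod 8) = (i : ZMod 8) + 4 by push_cast; ring]
    obtain ⟨y, hy, z, hz, hyz⟩ := AR233.core2 (i : ZMod 8) x
    exact ⟨y, hy, z, hz, hyz⟩
  · intro i j hji hji4
    rw [show ((i + 4 : ℤ) : ZMod 8) = (i : ZMod 8) + 4 by push_cast; ring] at hji4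
    ext x
    simp only [AR233.Xc_eq, Set.mem_add, Set.mem_setOf_eq, Set.mem_compl_iff,
      Set.mem_singleton_iff]
    exact (AR233.core3 (i : ZMod 8) (j : ZMod 8) hji hji4 x).symm
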